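/- Let X be a nonempty finite type, p, p̂ : X → ℝ two probability vectors, r, V*, V̂ : X → ℝ, γ ∈ [0,1), Q̂, Q* ∈ ℝ, ν ∈ [0,1], and ε, ε̄, Φ ≥ 0 with ε ≤ ε̄. Assume |Q̂ − Q*| ≤ ε, |V̂(x) − V*(x)| ≤ ε for all x ∈ X, |Σ_{x'} (p(x') − p̂(x'))·(r(x') + γ·V*(x'))| ≥ Φ, and the modified information advantage condition ν·Φ > 2·(1 + γ)·ε̄. Then the dynamic-attack deviation limit satisfies |Q̂ − Q* + γ·Σ_{x'} p(x')·(V*(x') − V̂(x')) + ν·Σ_{x'} (p(x') − p̂(x'))·(r(x') + γ·V*(x'))| > (1 + γ)·ε̄, while the secure-case limit satisfies |Q̂ − Q* + γ·Σ_{x'} p(x')·(V*(x') − V̂(x'))| ≤ (1 + γ)·ε̄. -/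
import Mathlib


open Finset

/-- **Theorem 9 (separation claim):** under the modified information advantage
condition `ν·Φ > 2·(1+γ)·ε̄`, the dynamic-attack deviation limit exceeds the
threshold `(1+γ)·ε̄`, while the secure-case limit stays at or below it. -/
theorem dynamic_attack_separation
    {X : Type*} [Fintype X] [Nonempty X]
    (p phat : X → ℝ)
    (hp0 : ∀ x, 0 ≤ p x) (hp1 : ∑ x, p x = 1)
    (hphat0 : ∀ x, 0 ≤ phat x) (hphat1 : ∑ x, phat x = 1)
    (r Vstar Vhat : X → ℝ) (γ : ℝ) (hγ0 : 0 ≤ γ) (hγ1 : γ < 1)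
    (Qhat Qstar : ℝ) (ν ε εbar Φ : ℝ)
    (hν0 : 0 ≤ ν) (hν1 : ν ≤ 1)
    (hε : 0 ≤ ε) (hεbar : 0 ≤ εbar) (hΦ : 0 ≤ Φ) (hεle : ε ≤ εbar)
    (hQ : |Qhat - Qstar| ≤ ε)
    (hV : ∀ x, |Vhat x - Vstar x| ≤ ε)
    (hdrift : |∑ x, (p x - phat x) * (r x + γ * Vstar x)| ≥ Φ)
    (hInfoAdv : ν * Φ > 2 * (1 + γ) * εbar) :
    |Qhat - Qstar + γ * ∑ x, p x * (Vstar x - Vhat x)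
        + ν * ∑ x, (p x - phat x) * (r x + γ * Vstar x)| > (1 + γ) * εbar ∧
    |Qhat - Qstar + γ * ∑ x, p x * (Vstar x - Vhat x)| ≤ (1 + γ) * εbar := by
  set S := Qhat - Qstar + γ * ∑ x, p x * (Vstar x - Vhat x) with hS
  set D := ∑ x, (p x - phat x) * (r x + γ * Vstar x) with hD
  have hsum : |∑ x, p x * (Vstar x - Vhat x)| ≤ ε := by
    calc |∑ x, p x * (Vstar x - Vhat x)| ≤ ∑ x, |p x * (Vstar x - Vhat x)| :=
          Finset.abs_sum_le_sum_abs _ _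
      _ ≤ ∑ x, p x * ε := by
          refine Finset.sum_le_sum fun x _ => ?_
          rw [abs_mul, abs_of_nonneg (hp0 x)]
          exact mul_le_mul_of_nonneg_left (by rw [abs_sub_comm]; exact hV x) (hp0 x)
      _ = ε := by rw [← Finset.sum_mul, hp1, one_mul]
  have hSle : |S| ≤ (1 + γ) * εbar := by
    calc |S| ≤ |Qhat - Qstar| + |γ * ∑ x, p x * (Vstar x - Vhat x)| := abs_add_le _ _
      _ ≤ ε + γ * ε := by
          rw [abs_mul, abs_of_nonneg hγ0]
          exact add_le_add hQ (mul_le_mul_of_nonneg_left hsum hγ0)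
      _ = (1 + γ) * ε := by ring
      _ ≤ (1 + γ) * εbar := by nlinarith
  have hνD : ν * Φ ≤ |ν * D| := by
    rw [abs_mul, abs_of_nonneg hν0]
    exact mul_le_mul_of_nonneg_left hdrift hν0
  refine ⟨?_, hSle⟩
  have h1 : |ν * D| ≤ |S + ν * D| + |S| := by
    have := abs_add_le (S + ν * D) (-S)
    simpa [abs_neg] using this
  have h2 : |ν * D| - |S| ≤ |S + ν * D| := by linarith
  nlinarith [abs_nonneg (S + ν * D)]
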